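/- Let N ≥ 1, let p_1,...,p_N be reals with 0 ≤ p_1 ≤ ... ≤ p_N, let L ≥ 0 and let k, l be real constants with k ≥ 1 and l ≥ 1. Define q_j = max(0, p_j − L), r_j = k·p_j + l·q_j, s_j(n,i) = p_j·n − q_j·i + c_j for arbitrary reals c_j, and the Type I function f^n_i = max over all (μ_1,...,μ_N) ∈ {0,1}^N of [Σ_{j=1}^N μ_j·s_j(n,i) − Σ_{1≤j<j'≤N} μ_j·μ_{j'}·r_j]. Then for all real n, i: f^n_i + f^{n+k−1}_{i−l−1} = max( f^{n+k−1}_{i−l} + f^n_{i−1}, f^{n+k}_{i−l} + f^{n−1}_{i−1} − L ). -/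

import Mathlib

set_option maxHeartbeats 2000000


open Finset

/-- Type I generalized ultradiscrete soliton expression:
`max` over all `(μ_1,...,μ_N) ∈ {0,1}^N` of
`Σ_j μ_j s_j − Σ_{j<j'} μ_j μ_{j'} r_j`. -/
noncomputable def typeIMax (N : ℕ) (s r : Fin N → ℝ) : ℝ :=
  Finset.univ.sup' Finset.univ_nonempty fun μ : Fin N → Bool =>
    (∑ j, (if μ j then (1 : ℝ) else 0) * s j) -
      ∑ j, ∑ j', if j < j' then
        (if μ j then (1 : ℝ) else 0) * (if μ j' then (1 : ℝ) else 0) * r j else 0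

lemma typeIMax_succ (M : ℕ) (s r : Fin (M+1) → ℝ) :
    typeIMax (M+1) s r =
      max (typeIMax M (fun a => s a.castSucc) (fun a => r a.castSucc))
        (s (Fin.last M) +
          typeIMax M (fun a => s a.castSucc - r a.castSucc) (fun a => r a.castSucc)) := by
  have hval : ∀ μ : Fin (M+1) → Bool,
      ((∑ j, (if μ j then (1 : ℝ) else 0) * s j) -
        ∑ j, ∑ j', if j < j' then
          (if μ j then (1 : ℝ) else 0) * (if μ j' then (1 : ℝ) else 0) * r j else 0)
      = ((∑ j : Fin M, (if μ j.castSucc then (1 : ℝ) else 0) * s j.castSucc) -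
          ∑ j : Fin M, ∑ j' : Fin M, if j < j' then
            (if μ j.castSucc then (1 : ℝ) else 0) * (if μ j'.castSucc then (1 : ℝ) else 0) * r j.castSucc else 0)
        + (if μ (Fin.last M) then
            s (Fin.last M) - ∑ j : Fin M, (if μ j.castSucc then (1 : ℝ) else 0) * r j.castSucc
          else 0) := by
    intro μ
    rw [Fin.sum_univ_castSucc (f := fun j => (if μ j then (1 : ℝ) else 0) * s j)]
    rw [Fin.sum_univ_castSucc (f := fun j => ∑ j', if j < j' then
          (if μ j then (1 : ℝ) else 0) * (if μ j' then (1 : ℝ) else 0) * r j else 0)]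
    have hlast : (∑ j' : Fin (M+1), if Fin.last M < j' then
        (if μ (Fin.last M) then (1 : ℝ) else 0) * (if μ j' then (1 : ℝ) else 0) * r (Fin.last M) else 0) = 0 := by
      apply Finset.sum_eq_zero
      intro j' _
      rw [if_neg (not_lt.mpr (Fin.le_last j'))]
    rw [hlast]
    have hrow : ∀ j : Fin M, (∑ j' : Fin (M+1), if j.castSucc < j' then
        (if μ j.castSucc then (1 : ℝ) else 0) * (if μ j' then (1 : ℝ) else 0) * r j.castSucc else 0)
        = (∑ j' : Fin M, if j < j' then
            (if μ j.castSucc then (1 : ℝ) else 0) * (if μ j'.castSucc then (1 : ℝ) else 0) * r j.castSucc else 0)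
          + (if μ j.castSucc then (1 : ℝ) else 0) * (if μ (Fin.last M) then (1 : ℝ) else 0) * r j.castSucc := by
      intro j
      rw [Fin.sum_univ_castSucc (f := fun j' => if j.castSucc < j' then
          (if μ j.castSucc then (1 : ℝ) else 0) * (if μ j' then (1 : ℝ) else 0) * r j.castSucc else 0)]
      rw [if_pos (Fin.castSucc_lt_last j)]
      congr 1
    rw [Finset.sum_congr rfl (fun j _ => hrow j), Finset.sum_add_distrib]
    cases hμ : μ (Fin.last M)
    · simp [hμ]
    · simp [hμ]; ring
  have hsub : ∀ (s' r' : Fin M → ℝ) (μ' : Fin M → Bool),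
      (∑ j, (if μ' j then (1 : ℝ) else 0) * (s' j - r' j))
      = (∑ j, (if μ' j then (1 : ℝ) else 0) * s' j)
        - ∑ j, (if μ' j then (1 : ℝ) else 0) * r' j := by
    intro s' r' μ'
    rw [← Finset.sum_sub_distrib]
    congr 1; funext j; ring
  unfold typeIMax
  apply le_antisymm
  · apply Finset.sup'_le
    intro μ _
    rw [hval μ]
    cases hμ : μ (Fin.last M)
    · simp only [Bool.false_eq_true, if_false, add_zero]
      refine le_max_of_le_left ?_
      exact Finset.le_sup' (b := fun a : Fin M => μ a.castSucc)
        (f := fun μ' : Fin M → Bool =>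
          (∑ j, (if μ' j then (1 : ℝ) else 0) * s j.castSucc) -
            ∑ j, ∑ j', if j < j' then
              (if μ' j then (1 : ℝ) else 0) * (if μ' j' then (1 : ℝ) else 0) * r j.castSucc else 0)
        (Finset.mem_univ _)
    · simp only [if_true]
      refine le_max_of_le_right ?_
      have hle := Finset.le_sup' (b := fun a : Fin M => μ a.castSucc)
        (f := fun μ' : Fin M → Bool =>
          (∑ j, (if μ' j then (1 : ℝ) else 0) * (s j.castSucc - r j.castSucc)) -
            ∑ j, ∑ j', if j < j' then
              (if μ' j then (1 : ℝ) else 0) * (if μ' j' then (1 : ℝ) else 0) * r j.castSucc else 0)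
        (Finset.mem_univ _)
      simp only at hle ⊢
      rw [hsub] at hle
      linarith
  · apply max_le
    · apply Finset.sup'_le
      intro μ' _
      have hle := Finset.le_sup' (b := Fin.snoc μ' false)
        (f := fun μ : Fin (M+1) → Bool =>
          (∑ j, (if μ j then (1 : ℝ) else 0) * s j) -
            ∑ j, ∑ j', if j < j' then
              (if μ j then (1 : ℝ) else 0) * (if μ j' then (1 : ℝ) else 0) * r j else 0)
        (Finset.mem_univ _)
      rw [hval (Fin.snoc μ' false)] at hle
      simp only [Fin.snoc_castSucc, Fin.snoc_last, Bool.false_eq_true, if_false, add_zero] at hle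
      exact le_trans (le_of_eq rfl) hle
    · rw [add_comm, ← le_sub_iff_add_le]
      apply Finset.sup'_le
      intro μ' _
      rw [le_sub_iff_add_le, add_comm]
      have hle := Finset.le_sup' (b := Fin.snoc μ' true)
        (f := fun μ : Fin (M+1) → Bool =>
          (∑ j, (if μ j then (1 : ℝ) else 0) * s j) -
            ∑ j, ∑ j', if j < j' then
              (if μ j then (1 : ℝ) else 0) * (if μ j' then (1 : ℝ) else 0) * r j else 0)
        (Finset.mem_univ _)
      rw [hval (Fin.snoc μ' true)] at hle
      simp only [Fin.snoc_castSucc, Fin.snoc_last, if_true] at hle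
      rw [hsub (fun a => s a.castSucc) (fun a => r a.castSucc) μ']
      linarith

noncomputable def uStep (k l pn qn cn : ℝ) (g : ℝ → ℝ → ℝ) : ℝ → ℝ → ℝ :=
  fun x y => max (g x y) (pn * x - qn * y + cn + g (x - k) (y + l))

noncomputable def uIter (k l : ℝ) (pe qe ce : ℕ → ℝ) : ℕ → ℝ → ℝ → ℝ
  | 0 => fun _ _ => 0
  | (j+1) => uStep k l (pe j) (qe j) (ce j) (uIter k l pe qe ce j)

lemma uIter_succ (k l : ℝ) (pe qe ce : ℕ → ℝ) (j : ℕ) (x y : ℝ) :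
    uIter k l pe qe ce (j+1) x y
      = max (uIter k l pe qe ce j x y)
          (pe j * x - qe j * y + ce j + uIter k l pe qe ce j (x - k) (y + l)) := rfl

lemma bridge (k l : ℝ) (pe qe ce : ℕ → ℝ) :
    ∀ (M : ℕ) (n i : ℝ),
      typeIMax M (fun a : Fin M => pe a * n - qe a * i + ce a)
        (fun a : Fin M => k * pe a + l * qe a) = uIter k l pe qe ce M n i := by
  intro M
  induction M with
  | zero =>
    intro n i
    simp [typeIMax, uIter]
  | succ M ih =>
    intro n i
    rw [typeIMax_succ]
    simp only [Fin.coe_castSucc, Fin.val_last]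
    have e3 : (fun a : Fin M => pe ↑a * n - qe ↑a * i + ce ↑a - (k * pe ↑a + l * qe ↑a))
        = fun a : Fin M => pe ↑a * (n - k) - qe ↑a * (i + l) + ce ↑a := by
      funext a; ring
    rw [e3, ih n i, ih (n-k) (i+l)]
    exact (uIter_succ k l pe qe ce M n i).symm

structure UPack (L k l ph qh : ℝ) (h : ℝ → ℝ → ℝ) : Prop where
  yi : qh = 0 → ∀ u v v' : ℝ, h u v = h u v'
  m3 : ∀ Qb, qh ≤ Qb → ∀ u v : ℝ,
    h u (v-1) + h (u-k) (v+l) ≤ h u v + h (u-k) (v+l-1) + Qb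
  m4 : ∀ Pb, ph ≤ Pb → ∀ (j : ℕ) (d : ℝ), 0 ≤ d → ∀ u v : ℝ,
    h (u - j*k) (v + j*l - 1) + h (u+d) v ≤ h u v + h (u + d - j*k) (v + j*l - 1) + j*Pb*d
  m5 : ∀ Qb, qh ≤ Qb → ∀ (j : ℕ) (d : ℝ), 0 ≤ d → ∀ u v : ℝ,
    h (u - j*k) (v + j*l - 1) + h u (v - d) ≤ h u v + h (u - j*k) (v - d + j*l - 1) + j*Qb*d
  t2c : ∀ Qb, qh ≤ Qb → ∀ u v : ℝ,
    h u (v-1) + h (u-1) v ≤ h u v + h (u-1) (v-1) + Qb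
  t2w : ∀ Pb Qb, ph ≤ Pb → qh ≤ Qb → ∀ (m j : ℕ), 1 ≤ m → ∀ u v : ℝ,
    h (u - j*k) (v + j*l - 1) + h (u + m*k - 1) (v - m*l) ≤
      h u v + h (u + ((m:ℝ) - j)*k - 1) (v - ((m:ℝ) - j)*l - 1)
        + j*(Pb*((m:ℝ)*k-1) + Qb*((m:ℝ)*l))
  t3 : ∀ Pb, ph ≤ Pb → ∀ (m : ℕ), ∀ u v : ℝ,
    h (u-1) (v-1) + h (u + m*k) (v - m*l) ≤ h u v + h (u + m*k - 1) (v - m*l - 1) + m * min Pb L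
  t1 : ∀ Qb, qh ≤ Qb → ∀ (m : ℕ), ∀ u v : ℝ,
    h u v + h (u + m*k - 1) (v - m*l - 1) ≤
      max (h u (v-1) + h (u + m*k - 1) (v - m*l) + ((m:ℝ) - 1)*Qb)
          (h (u-1) (v-1) + h (u + m*k) (v - m*l) - m*L)

lemma max_add_max_le {a b c d e : ℝ} (h1 : a + c ≤ e) (h2 : a + d ≤ e)
    (h3 : b + c ≤ e) (h4 : b + d ≤ e) : max a b + max c d ≤ e := by
  rcases max_cases a b with ⟨h,_⟩|⟨h,_⟩ <;> rcases max_cases c d with ⟨h',_⟩|⟨h',_⟩ <;>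
    rw [h, h'] <;> assumption

lemma upack_zero (L k l : ℝ) (hL : 0 ≤ L) (hk : 1 ≤ k) (hl : 1 ≤ l) :
    UPack L k l 0 0 (fun _ _ => 0) := by
  constructor
  · intro _ _ _ _; rfl
  · intro Qb hQb u v; simpa using hQb
  · intro Pb hPb j d hd u v; simp; positivity
  · intro Qb hQb j d hd u v; simp; positivity
  · intro Qb hQb u v; simpa using hQb
  · intro Pb Qb hPb hQb m j hm u v
    simp only [add_zero, zero_add]
    have h1 : (1:ℝ) ≤ (m:ℝ) := by exact_mod_cast hm
    have : (0:ℝ) ≤ (m:ℝ)*k - 1 := by nlinarith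
    have : (0:ℝ) ≤ (m:ℝ)*l := by positivity
    positivity
  · intro Pb hPb m u v
    simp only [add_zero, zero_add]
    have : (0:ℝ) ≤ min Pb L := le_min hPb hL
    positivity
  · intro Qb hQb m u v
    rcases Nat.eq_zero_or_pos m with hm | hm
    · subst hm
      refine le_max_of_le_right ?_
      simp
    · refine le_max_of_le_left ?_
      have h1 : (1:ℝ) ≤ (m:ℝ) := by exact_mod_cast hm
      have : (0:ℝ) ≤ ((m:ℝ)-1)*Qb := by
        apply mul_nonneg <;> linarith
      simp only [add_zero, zero_add]
      linarith

lemma upack_step (L k l ph qh pn qn cn : ℝ) (g : ℝ → ℝ → ℝ)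
    (hL : 0 ≤ L) (hk : 1 ≤ k) (hl : 1 ≤ l)
    (hpn : 0 ≤ pn) (hqn : qn = max 0 (pn - L))
    (hph : 0 ≤ ph) (hphn : ph ≤ pn) (hqh : 0 ≤ qh) (hqhn : qh ≤ qn)
    (P : UPack L k l ph qh g) :
    UPack L k l pn qn (uStep k l pn qn cn g) := by
  have hq0 : 0 ≤ qn := hqn ▸ le_max_left _ _
  have hqpL : pn - L ≤ qn := hqn ▸ le_max_right _ _
  have hpq0 : 0 ≤ pn - qn := by
    rcases max_cases 0 (pn - L) with ⟨h1,h2⟩|⟨h1,h2⟩ <;> rw [← hqn] at h1 <;> linarith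
  have hpqL : pn - qn ≤ L := by linarith
  have hqhQ : ∀ Qb, qn ≤ Qb → qh ≤ Qb := fun Qb h => le_trans hqhn h
  have hphP : ∀ Pb, pn ≤ Pb → ph ≤ Pb := fun Pb h => le_trans hphn h
  have hfg : ∀ u v, g u v ≤ uStep k l pn qn cn g u v := fun u v => le_max_left _ _
  have hfs : ∀ u v, pn*u - qn*v + cn + g (u-k) (v+l) ≤ uStep k l pn qn cn g u v :=
    fun u v => le_max_right _ _
  have hfm : ∀ u v, uStep k l pn qn cn g u v
      = max (g u v) (pn*u - qn*v + cn + g (u-k) (v+l)) := fun _ _ => rfl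
  constructor
  case yi =>
    intro hqn0 u v v'
    have hqh0 : qh = 0 := le_antisymm (hqn0 ▸ hqhn) hqh
    have h1 := P.yi hqh0 u v v'
    have h2 := P.yi hqh0 (u-k) (v+l) (v'+l)
    simp only [uStep, hqn0, h1, h2]
    ring_nf
  case m3 =>
    intro Qb hQb u v
    rw [hfm u (v-1), hfm (u-k) (v+l)]
    apply max_add_max_le
    · -- gg
      have I := P.m3 Qb (hqhQ Qb hQb) u v
      have T1 := hfg u v
      have T2 := hfg (u-k) (v+l-1)
      linarith
    · -- gs
      have I1 := P.m3 qn hqhn u v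
      have I2 := P.m3 Qb (hqhQ Qb hQb) (u-k) (v+l)
      have T1 := hfg u v
      have T2 := hfs (u-k) (v+l-1)
      ring_nf (config := { ifUnchanged := .silent }) at I1 I2 T1 T2 ⊢
      linarith
    · -- sg
      have T1 := hfs u v
      have T2 := hfg (u-k) (v+l-1)
      ring_nf at T1 T2 ⊢
      linarith
    · -- ss
      have I := P.m3 Qb (hqhQ Qb hQb) (u-k) (v+l)
      have T1 := hfs u v
      have T2 := hfs (u-k) (v+l-1)
      ring_nf at I T1 T2 ⊢
      linarith
  case m4 =>
    intro Pb hPb j d hd u v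
    rcases j with _|jj
    · simp only [Nat.cast_zero, zero_mul, sub_zero, add_zero, zero_add]
      rw [hfm u (v-1), hfm (u+d) v]
      apply max_add_max_le
      · have I := P.m4 Pb (hphP Pb hPb) 0 d hd u v
        have T1 := hfg u v
        have T2 := hfg (u+d) (v-1)
        push_cast at I
        ring_nf (config := { ifUnchanged := .silent }) at I T1 T2 ⊢
        linarith
      · have I1 := P.m3 qn hqhn u v
        have I2 := P.m4 Pb (hphP Pb hPb) 0 d hd (u-k) (v+l)
        have T1 := hfg u v
        have T2 := hfs (u+d) (v-1)
        push_cast at I2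
        ring_nf (config := { ifUnchanged := .silent }) at I1 I2 T1 T2 ⊢
        linarith
      · have I := P.m4 pn hphn 1 d hd u v
        have T1 := hfg u v
        have T2 := hfs (u+d) (v-1)
        push_cast at I
        ring_nf (config := { ifUnchanged := .silent }) at I T1 T2 ⊢
        linarith
      · have I := P.m4 Pb (hphP Pb hPb) 0 d hd (u-k) (v+l)
        have T1 := hfs u v
        have T2 := hfs (u+d) (v-1)
        push_cast at I
        ring_nf at I T1 T2 ⊢
        linarith
    · push_cast
      rw [hfm (u - ((jj:ℝ)+1)*k) (v + ((jj:ℝ)+1)*l - 1), hfm (u+d) v]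
      have hbud : ((jj:ℝ)+1)*pn*d ≤ ((jj:ℝ)+1)*Pb*d := by
        nlinarith [mul_nonneg (mul_nonneg (show (0:ℝ) ≤ (jj:ℝ)+1 by positivity)
          (show (0:ℝ) ≤ Pb - pn by linarith)) hd]
      apply max_add_max_le
      · have I := P.m4 Pb (hphP Pb hPb) (jj+1) d hd u v
        have T1 := hfg u v
        have T2 := hfg (u + d - ((jj:ℝ)+1)*k) (v + ((jj:ℝ)+1)*l - 1)
        push_cast at I
        ring_nf (config := { ifUnchanged := .silent }) at I T1 T2 ⊢
        linarith
      · -- gs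
        have I := P.m4 pn hphn jj d hd (u-k) (v+l)
        have T1 := hfs u v
        have T2 := hfg (u + d - ((jj:ℝ)+1)*k) (v + ((jj:ℝ)+1)*l - 1)
        push_cast at I
        ring_nf at I T1 T2 hbud ⊢
        linarith
      · -- sg
        have I := P.m4 pn hphn (jj+2) d hd u v
        have T1 := hfg u v
        have T2 := hfs (u + d - ((jj:ℝ)+1)*k) (v + ((jj:ℝ)+1)*l - 1)
        push_cast at I
        ring_nf (config := { ifUnchanged := .silent }) at I T1 T2 hbud ⊢
        linarith
      · have I := P.m4 Pb (hphP Pb hPb) (jj+1) d hd (u-k) (v+l)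
        have T1 := hfs u v
        have T2 := hfs (u + d - ((jj:ℝ)+1)*k) (v + ((jj:ℝ)+1)*l - 1)
        push_cast at I
        ring_nf at I T1 T2 ⊢
        linarith
  case m5 =>
    intro Qb hQb j d hd u v
    rcases j with _|jj
    · simp only [Nat.cast_zero, zero_mul, sub_zero, add_zero, zero_add]
      rw [hfm u (v-1), hfm u (v-d)]
      apply max_add_max_le
      · have I := P.m5 Qb (hqhQ Qb hQb) 0 d hd u v
        have T1 := hfg u v
        have T2 := hfg u (v-d-1)
        push_cast at I
        ring_nf (config := { ifUnchanged := .silent }) at I T1 T2 ⊢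
        linarith
      · have I1 := P.m3 qn hqhn u v
        have I2 := P.m5 Qb (hqhQ Qb hQb) 0 d hd (u-k) (v+l)
        have T1 := hfg u v
        have T2 := hfs u (v-d-1)
        push_cast at I2
        ring_nf (config := { ifUnchanged := .silent }) at I1 I2 T1 T2 ⊢
        linarith
      · have I := P.m5 qn hqhn 1 d hd u v
        have T1 := hfg u v
        have T2 := hfs u (v-d-1)
        push_cast at I
        ring_nf (config := { ifUnchanged := .silent }) at I T1 T2 ⊢
        linarith
      · have I := P.m5 Qb (hqhQ Qb hQb) 0 d hd (u-k) (v+l)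
        have T1 := hfs u v
        have T2 := hfs u (v-d-1)
        push_cast at I
        ring_nf at I T1 T2 ⊢
        linarith
    · push_cast
      rw [hfm (u - ((jj:ℝ)+1)*k) (v + ((jj:ℝ)+1)*l - 1), hfm u (v-d)]
      have hbud : ((jj:ℝ)+1)*qn*d ≤ ((jj:ℝ)+1)*Qb*d := by
        nlinarith [mul_nonneg (mul_nonneg (show (0:ℝ) ≤ (jj:ℝ)+1 by positivity)
          (show (0:ℝ) ≤ Qb - qn by linarith)) hd]
      apply max_add_max_le
      · have I := P.m5 Qb (hqhQ Qb hQb) (jj+1) d hd u v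
        have T1 := hfg u v
        have T2 := hfg (u - ((jj:ℝ)+1)*k) (v - d + ((jj:ℝ)+1)*l - 1)
        push_cast at I
        ring_nf (config := { ifUnchanged := .silent }) at I T1 T2 ⊢
        linarith
      · have I := P.m5 qn hqhn jj d hd (u-k) (v+l)
        have T1 := hfs u v
        have T2 := hfg (u - ((jj:ℝ)+1)*k) (v - d + ((jj:ℝ)+1)*l - 1)
        push_cast at I
        ring_nf at I T1 T2 hbud ⊢
        linarith
      · have I := P.m5 qn hqhn (jj+2) d hd u v
        have T1 := hfg u v
        have T2 := hfs (u - ((jj:ℝ)+1)*k) (v - d + ((jj:ℝ)+1)*l - 1)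
        push_cast at I
        ring_nf (config := { ifUnchanged := .silent }) at I T1 T2 hbud ⊢
        linarith
      · have I := P.m5 Qb (hqhQ Qb hQb) (jj+1) d hd (u-k) (v+l)
        have T1 := hfs u v
        have T2 := hfs (u - ((jj:ℝ)+1)*k) (v - d + ((jj:ℝ)+1)*l - 1)
        push_cast at I
        ring_nf at I T1 T2 ⊢
        linarith
  case t2c =>
    intro Qb hQb u v
    rw [hfm u (v-1), hfm (u-1) v]
    apply max_add_max_le
    · have I := P.t2c Qb (hqhQ Qb hQb) u v
      have T1 := hfg u v
      have T2 := hfg (u-1) (v-1)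
      linarith
    · -- gs : chain m3(qn) at (u,v) + t2c(Qb) at (u-k,v+l)
      have I1 := P.m3 qn hqhn u v
      have I2 := P.t2c Qb (hqhQ Qb hQb) (u-k) (v+l)
      have T1 := hfg u v
      have T2 := hfs (u-1) (v-1)
      ring_nf (config := { ifUnchanged := .silent }) at I1 I2 T1 T2 ⊢
      linarith
    · -- sg : m4_0 at (u-k,v+l) d=k-1, m5_0 at (u-1,v+l) d=l
      have I1 := P.m4 pn hphn 0 (k-1) (by linarith) (u-k) (v+l)
      have I2 := P.m5 qn hqhn 0 l (by linarith) (u-1) (v+l)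
      have T1 := hfs u v
      have T2 := hfg (u-1) (v-1)
      push_cast at I1 I2
      ring_nf at I1 I2 T1 T2 ⊢
      linarith
    · have I := P.t2c Qb (hqhQ Qb hQb) (u-k) (v+l)
      have T1 := hfs u v
      have T2 := hfs (u-1) (v-1)
      ring_nf at I T1 T2 ⊢
      linarith
  case t2w =>
    intro Pb Qb hPb hQb m j hm u v
    rcases m with _|mm
    · omega
    have hmm0 : (0:ℝ) ≤ (mm:ℝ) := Nat.cast_nonneg mm
    have hm1 : (1:ℝ) ≤ ((mm:ℝ)+1) := by linarith
    have hmk1 : (0:ℝ) ≤ ((mm:ℝ)+1)*k - 1 := by nlinarith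
    have hml0 : (0:ℝ) ≤ ((mm:ℝ)+1)*l := by positivity
    have hE : pn*(((mm:ℝ)+1)*k-1) + qn*(((mm:ℝ)+1)*l) ≤ Pb*(((mm:ℝ)+1)*k-1) + Qb*(((mm:ℝ)+1)*l) := by
      nlinarith [mul_nonneg hmk1 (show (0:ℝ) ≤ Pb - pn by linarith),
                 mul_nonneg hml0 (show (0:ℝ) ≤ Qb - qn by linarith)]
    rcases j with _|jj
    · -- j = 0
      push_cast
      rw [hfm (u - 0*k) (v + 0*l - 1), hfm (u + ((mm:ℝ)+1)*k - 1) (v - ((mm:ℝ)+1)*l)]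
      apply max_add_max_le
      · have I := P.t2w Pb Qb (hphP Pb hPb) (hqhQ Qb hQb) (mm+1) 0 (by omega) u v
        have T1 := hfg u v
        have T2 := hfg (u + ((mm:ℝ)+1)*k - 1) (v - ((mm:ℝ)+1)*l - 1)
        push_cast at I
        ring_nf (config := { ifUnchanged := .silent }) at I T1 T2 ⊢
        linarith
      · -- gs
        rcases mm with _|nn
        · have I := P.t2c qn hqhn u v
          have T1 := hfg u v
          have T2 := hfs (u + ((0:ℝ)+1)*k - 1) (v - ((0:ℝ)+1)*l - 1)
          push_cast at I T1 T2 ⊢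
          ring_nf (config := { ifUnchanged := .silent }) at I T1 T2 ⊢
          linarith
        · have I := P.t2w Pb Qb (hphP Pb hPb) (hqhQ Qb hQb) (nn+1) 0 (by omega) u v
          have T1 := hfg u v
          have T2 := hfs (u + (((nn:ℝ)+1)+1)*k - 1) (v - (((nn:ℝ)+1)+1)*l - 1)
          push_cast at I T1 T2 ⊢
          ring_nf (config := { ifUnchanged := .silent }) at I T1 T2 ⊢
          linarith
      · -- sg
        have I := P.t2w pn qn hphn hqhn (mm+1) 1 (by omega) u v
        have T1 := hfg u v
        have T2 := hfs (u + ((mm:ℝ)+1)*k - 1) (v - ((mm:ℝ)+1)*l - 1)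
        push_cast at I
        ring_nf (config := { ifUnchanged := .silent }) at I T1 T2 ⊢
        linarith
      · have I := P.t2w Pb Qb (hphP Pb hPb) (hqhQ Qb hQb) (mm+1) 0 (by omega) (u-k) (v+l)
        have T1 := hfs u v
        have T2 := hfs (u + ((mm:ℝ)+1)*k - 1) (v - ((mm:ℝ)+1)*l - 1)
        push_cast at I
        ring_nf at I T1 T2 ⊢
        linarith
    · -- j = jj+1
      push_cast
      rw [hfm (u - ((jj:ℝ)+1)*k) (v + ((jj:ℝ)+1)*l - 1),
          hfm (u + ((mm:ℝ)+1)*k - 1) (v - ((mm:ℝ)+1)*l)]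
      have hbud : ((jj:ℝ)+1)*(pn*(((mm:ℝ)+1)*k-1) + qn*(((mm:ℝ)+1)*l))
          ≤ ((jj:ℝ)+1)*(Pb*(((mm:ℝ)+1)*k-1) + Qb*(((mm:ℝ)+1)*l)) :=
        mul_le_mul_of_nonneg_left hE (by positivity)
      apply max_add_max_le
      · have I := P.t2w Pb Qb (hphP Pb hPb) (hqhQ Qb hQb) (mm+1) (jj+1) (by omega) u v
        have T1 := hfg u v
        have T2 := hfg (u + (((mm:ℝ)+1) - ((jj:ℝ)+1))*k - 1) (v - (((mm:ℝ)+1) - ((jj:ℝ)+1))*l - 1)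
        push_cast at I
        ring_nf (config := { ifUnchanged := .silent }) at I T1 T2 ⊢
        linarith
      · -- gs
        have I := P.t2w pn qn hphn hqhn (mm+1) jj (by omega) (u-k) (v+l)
        have T1 := hfs u v
        have T2 := hfg (u + (((mm:ℝ)+1) - ((jj:ℝ)+1))*k - 1) (v - (((mm:ℝ)+1) - ((jj:ℝ)+1))*l - 1)
        push_cast at I
        ring_nf at I T1 T2 hbud ⊢
        linarith
      · -- sg
        have I := P.t2w pn qn hphn hqhn (mm+1) (jj+2) (by omega) u v
        have T1 := hfg u v
        have T2 := hfs (u + (((mm:ℝ)+1) - ((jj:ℝ)+1))*k - 1) (v - (((mm:ℝ)+1) - ((jj:ℝ)+1))*l - 1)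
        push_cast at I
        ring_nf (config := { ifUnchanged := .silent }) at I T1 T2 hbud ⊢
        linarith
      · have I := P.t2w Pb Qb (hphP Pb hPb) (hqhQ Qb hQb) (mm+1) (jj+1) (by omega) (u-k) (v+l)
        have T1 := hfs u v
        have T2 := hfs (u + (((mm:ℝ)+1) - ((jj:ℝ)+1))*k - 1) (v - (((mm:ℝ)+1) - ((jj:ℝ)+1))*l - 1)
        push_cast at I
        ring_nf at I T1 T2 ⊢
        linarith
  case t3 =>
    intro Pb hPb m u v
    have hpnqn_eq : pn - qn = min pn L := by
      rcases max_cases 0 (pn - L) with ⟨h1,h2⟩|⟨h1,h2⟩ <;> rw [← hqn] at h1 <;>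
        [rw [min_eq_left (by linarith)]; rw [min_eq_right (by linarith)]] <;> linarith
    have hminP : min pn L ≤ min Pb L := min_le_min hPb (le_refl L)
    rcases m with _|mm
    · push_cast
      ring_nf
      have h0 : (0:ℝ) ≤ min Pb L := le_min (by linarith) hL
      nlinarith [hfg u v]
    · push_cast
      rw [hfm (u-1) (v-1), hfm (u + ((mm:ℝ)+1)*k) (v - ((mm:ℝ)+1)*l)]
      have hbud : ((mm:ℝ))*(min pn L) ≤ ((mm:ℝ))*(min Pb L) :=
        mul_le_mul_of_nonneg_left hminP (by positivity)
      apply max_add_max_le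
      · have I := P.t3 Pb (hphP Pb hPb) (mm+1) u v
        have T1 := hfg u v
        have T2 := hfg (u + ((mm:ℝ)+1)*k - 1) (v - ((mm:ℝ)+1)*l - 1)
        push_cast at I
        ring_nf (config := { ifUnchanged := .silent }) at I T1 T2 ⊢
        linarith
      · -- gs
        have I := P.t3 pn hphn mm u v
        have T1 := hfg u v
        have T2 := hfs (u + ((mm:ℝ)+1)*k - 1) (v - ((mm:ℝ)+1)*l - 1)
        push_cast at I
        ring_nf (config := { ifUnchanged := .silent }) at I T1 T2 hbud hpnqn_eq hminP ⊢
        linarith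
      · -- sg
        have I := P.t3 pn hphn (mm+2) (u-k) (v+l)
        have T1 := hfs u v
        have T2 := hfg (u + ((mm:ℝ)+1)*k - 1) (v - ((mm:ℝ)+1)*l - 1)
        push_cast at I
        ring_nf (config := { ifUnchanged := .silent }) at I T1 T2 hbud hpnqn_eq hminP ⊢
        linarith
      · have I := P.t3 Pb (hphP Pb hPb) (mm+1) (u-k) (v+l)
        have T1 := hfs u v
        have T2 := hfs (u + ((mm:ℝ)+1)*k - 1) (v - ((mm:ℝ)+1)*l - 1)
        push_cast at I
        ring_nf at I T1 T2 ⊢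
        linarith
  case t1 =>
    intro Qb hQb m u v
    have hQb0 : (0:ℝ) ≤ Qb := le_trans hq0 hQb
    rcases m with _|mm
    · refine le_max_of_le_right ?_
      push_cast
      ring_nf
      linarith
    · push_cast
      have hbudq : (mm:ℝ)*qn ≤ (mm:ℝ)*Qb := mul_le_mul_of_nonneg_left hQb (by positivity)
      rw [hfm u v, hfm (u + ((mm:ℝ)+1)*k - 1) (v - ((mm:ℝ)+1)*l - 1)]
      apply max_add_max_le
      · -- α gg
        have I := P.t1 Qb (hqhQ Qb hQb) (mm+1) u v
        push_cast at I
        rcases le_max_iff.mp I with I|I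
        · refine le_max_of_le_left ?_
          have T1 := hfg u (v-1)
          have T2 := hfg (u + ((mm:ℝ)+1)*k - 1) (v - ((mm:ℝ)+1)*l)
          ring_nf at I T1 T2 ⊢
          linarith
        · refine le_max_of_le_right ?_
          have T1 := hfg (u-1) (v-1)
          have T2 := hfg (u + ((mm:ℝ)+1)*k) (v - ((mm:ℝ)+1)*l)
          ring_nf at I T1 T2 ⊢
          linarith
      · -- β gs
        rcases le_or_gt L pn with hLp | hpL
        · have hqnL : qn = pn - L := by rw [hqn]; exact max_eq_right (by linarith)
          have I := P.t1 Qb (hqhQ Qb hQb) mm u v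
          push_cast at I
          rcases le_max_iff.mp I with I|I
          · refine le_max_of_le_left ?_
            have T1 := hfg u (v-1)
            have T2 := hfs (u + ((mm:ℝ)+1)*k - 1) (v - ((mm:ℝ)+1)*l)
            ring_nf at I T1 T2 ⊢
            linarith
          · refine le_max_of_le_right ?_
            have T1 := hfg (u-1) (v-1)
            have T2 := hfs (u + ((mm:ℝ)+1)*k) (v - ((mm:ℝ)+1)*l)
            ring_nf at I T1 T2 hqnL ⊢
            linarith
        · have hqn0 : qn = 0 := by rw [hqn]; exact max_eq_left (by linarith)
          have hqh0 : qh = 0 := le_antisymm (by rw [← hqn0]; exact hqhn) hqh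
          refine le_max_of_le_left ?_
          have T1 := hfg u (v-1)
          have T2 := hfs (u + ((mm:ℝ)+1)*k - 1) (v - ((mm:ℝ)+1)*l)
          have e1 := P.yi hqh0 u (v-1) v
          have e2 := P.yi hqh0 (u + ((mm:ℝ)+1)*k - 1 - k) (v - ((mm:ℝ)+1)*l + l)
            (v - ((mm:ℝ)+1)*l - 1 + l)
          have hmmQb : (0:ℝ) ≤ (mm:ℝ)*Qb := by positivity
          ring_nf at T1 T2 e1 e2 ⊢
          rw [hqn0] at *
          ring_nf at T1 T2 ⊢
          linarith
      · -- γ sg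
        have I := P.t1 qn hqhn (mm+2) (u-k) (v+l)
        push_cast at I
        rcases le_max_iff.mp I with I|I
        · refine le_max_of_le_left ?_
          have T1 := hfs u (v-1)
          have T2 := hfg (u + ((mm:ℝ)+1)*k - 1) (v - ((mm:ℝ)+1)*l)
          ring_nf at I T1 T2 hbudq ⊢
          linarith
        · refine le_max_of_le_right ?_
          have T1 := hfs (u-1) (v-1)
          have T2 := hfg (u + ((mm:ℝ)+1)*k) (v - ((mm:ℝ)+1)*l)
          ring_nf at I T1 T2 ⊢
          linarith
      · -- δ ss
        have I := P.t1 Qb (hqhQ Qb hQb) (mm+1) (u-k) (v+l)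
        push_cast at I
        rcases le_max_iff.mp I with I|I
        · refine le_max_of_le_left ?_
          have T1 := hfs u (v-1)
          have T2 := hfs (u + ((mm:ℝ)+1)*k - 1) (v - ((mm:ℝ)+1)*l)
          ring_nf at I T1 T2 ⊢
          linarith
        · refine le_max_of_le_right ?_
          have T1 := hfs (u-1) (v-1)
          have T2 := hfs (u + ((mm:ℝ)+1)*k) (v - ((mm:ℝ)+1)*l)
          ring_nf at I T1 T2 ⊢
          linarith

lemma umain_aux (L k l : ℝ) (pe qe ce : ℕ → ℝ) (hL : 0 ≤ L) (hk : 1 ≤ k) (hl : 1 ≤ l)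
    (hpe0 : ∀ j, 0 ≤ pe j) (hqe : ∀ j, qe j = max 0 (pe j - L))
    (hpem : ∀ j, pe j ≤ pe (j+1)) (N : ℕ) (hN : 1 ≤ N)
    (hstep : ∀ (ph qh pn qn cn : ℝ) (g : ℝ → ℝ → ℝ),
      0 ≤ pn → qn = max 0 (pn - L) → 0 ≤ ph → ph ≤ pn → 0 ≤ qh → qh ≤ qn →
      UPack L k l ph qh g → UPack L k l pn qn (uStep k l pn qn cn g)) (n i : ℝ) :
    uIter k l pe qe ce N n i + uIter k l pe qe ce N (n + k - 1) (i - l - 1) =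
      max (uIter k l pe qe ce N (n + k - 1) (i - l) + uIter k l pe qe ce N n (i - 1))
          (uIter k l pe qe ce N (n + k) (i - l) + uIter k l pe qe ce N (n - 1) (i - 1) - L) := by
  have hqe0 : ∀ j, 0 ≤ qe j := fun j => by rw [hqe]; exact le_max_left _ _
  have hqem : ∀ j, qe j ≤ qe (j+1) := by
    intro j; rw [hqe, hqe]
    exact max_le_max (le_refl 0) (by linarith [hpem j])
  have hPack : ∀ M : ℕ, UPack L k l (pe M) (qe M) (uIter k l pe qe ce (M+1)) := by
    intro M
    induction M with
    | zero =>
      exact hstep 0 0 (pe 0) (qe 0) (ce 0) _ (hpe0 0) (hqe 0)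
        (le_refl 0) (hpe0 0) (le_refl 0) (hqe0 0) (upack_zero L k l hL hk hl)
    | succ M ih =>
      exact hstep (pe M) (qe M) (pe (M+1)) (qe (M+1)) (ce (M+1)) _
        (hpe0 _) (hqe _) (hpe0 M) (hpem M) (hqe0 M) (hqem M) ih
  have hP := hPack (N-1)
  have hNN : N - 1 + 1 = N := by omega
  rw [hNN] at hP
  have T1 := hP.t1 (qe (N-1)) (le_refl _) 1 n i
  have T2 := hP.t2w (pe (N-1)) (qe (N-1)) (le_refl _) (le_refl _) 1 0 (le_refl 1) n i
  have T3 := hP.t3 (pe (N-1)) (le_refl _) 1 n i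
  have hminL : min (pe (N-1)) L ≤ L := min_le_right _ _
  push_cast at T1 T2 T3
  apply le_antisymm
  · rcases le_max_iff.mp T1 with h|h
    · apply le_max_of_le_left
      ring_nf at h ⊢
      linarith
    · apply le_max_of_le_right
      ring_nf at h ⊢
      linarith
  · apply max_le
    · ring_nf at T2 ⊢
      linarith
    · ring_nf at T3 ⊢
      linarith

theorem utoda_type_bilinear_typeI (N : ℕ) (hN : 1 ≤ N) (p c : Fin N → ℝ)
    (L k l : ℝ) (hp0 : ∀ j, 0 ≤ p j) (hpmono : Monotone p)
    (hL : 0 ≤ L) (hk : 1 ≤ k) (hl : 1 ≤ l)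
    (q r : Fin N → ℝ)
    (hq : ∀ j, q j = max 0 (p j - L))
    (hr : ∀ j, r j = k * p j + l * q j)
    (f : ℝ → ℝ → ℝ)
    (hf : ∀ n i : ℝ, f n i = typeIMax N (fun j => p j * n - q j * i + c j) r) :
    ∀ n i : ℝ,
      f n i + f (n + k - 1) (i - l - 1) =
        max (f (n + k - 1) (i - l) + f n (i - 1))
            (f (n + k) (i - l) + f (n - 1) (i - 1) - L) := by
  have hNlt : N - 1 < N := by omega
  set pe : ℕ → ℝ := fun j => p ⟨min j (N-1), lt_of_le_of_lt (min_le_right _ _) hNlt⟩ with hpedef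
  set qe : ℕ → ℝ := fun j => q ⟨min j (N-1), lt_of_le_of_lt (min_le_right _ _) hNlt⟩ with hqedef
  set ce : ℕ → ℝ := fun j => c ⟨min j (N-1), lt_of_le_of_lt (min_le_right _ _) hNlt⟩ with hcedef
  have hfin : ∀ a : Fin N, (⟨min (a : ℕ) (N-1), lt_of_le_of_lt (min_le_right _ _) hNlt⟩ : Fin N) = a := by
    intro a
    apply Fin.ext
    have := a.isLt
    simp only []
    omega
  have hpe_eq : ∀ a : Fin N, pe (a : ℕ) = p a := by
    intro a; rw [hpedef]; simp only []; rw [hfin a]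
  have hqe_eq : ∀ a : Fin N, qe (a : ℕ) = q a := by
    intro a; rw [hqedef]; simp only []; rw [hfin a]
  have hce_eq : ∀ a : Fin N, ce (a : ℕ) = c a := by
    intro a; rw [hcedef]; simp only []; rw [hfin a]
  have hfFF : ∀ x y : ℝ, f x y = uIter k l pe qe ce N x y := by
    intro x y
    rw [hf x y, ← bridge k l pe qe ce N x y]
    congr 1
    · funext a; rw [hpe_eq a, hqe_eq a, hce_eq a]
    · funext a; rw [hr a, hpe_eq a, hqe_eq a]
  intro n i
  simp only [hfFF]
  apply umain_aux L k l pe qe ce hL hk hl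
  · intro j; exact hp0 _
  · intro j; exact hq _
  · intro j
    apply hpmono
    show (⟨min j (N-1), _⟩ : Fin N) ≤ ⟨min (j+1) (N-1), _⟩
    simp only [Fin.mk_le_mk]
    omega
  · exact hN
  · intro ph qh pn qn cn g hpn hqn hph hphn hqh hqhn P
    exact upack_step L k l ph qh pn qn cn g hL hk hl hpn hqn hph hphn hqh hqhn P
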